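/- The vector of dimensions d = (1, 3+2√2, 2+√2, 2+√2, 2+2√2, 1+√2, 1+√2) is an eigenvector of the matrix N_{Y₁} = [[0,0,0,1,0,0,0],[0,1,1,1,1,1,0],[1,1,0,0,1,0,0],[0,1,1,0,0,0,1],[0,1,0,1,1,0,1],[0,0,1,0,1,0,0],[0,1,0,0,0,1,0]] with eigenvalue 2+√2. Moreover 2+√2 equals the largest (Perron–Frobenius) eigenvalue of N_{Y₁}: every complex eigenvalue of N_{Y₁} has absolute value at most 2+√2. -/

import Mathlib

open Matrix Polynomial

/-- The fusion matrix N_{Y₁}, over ℝ. -/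
def NY1 : Matrix (Fin 7) (Fin 7) ℝ :=
  !![0,0,0,1,0,0,0;
     0,1,1,1,1,1,0;
     1,1,0,0,1,0,0;
     0,1,1,0,0,0,1;
     0,1,0,1,1,0,1;
     0,0,1,0,1,0,0;
     0,1,0,0,0,1,0]

/-- The fusion matrix N_{Y₁}, over ℂ. -/
def NY1C : Matrix (Fin 7) (Fin 7) ℂ :=
  !![0,0,0,1,0,0,0;
     0,1,1,1,1,1,0;
     1,1,0,0,1,0,0;
     0,1,1,0,0,0,1;
     0,1,0,1,1,0,1;
     0,0,1,0,1,0,0;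
     0,1,0,0,0,1,0]

/-- The dimension vector d = (1, 3+2√2, 2+√2, 2+√2, 2+2√2, 1+√2, 1+√2). -/
noncomputable def dvec : Fin 7 → ℝ :=
  ![1, 3 + 2 * Real.sqrt 2, 2 + Real.sqrt 2, 2 + Real.sqrt 2,
    2 + 2 * Real.sqrt 2, 1 + Real.sqrt 2, 1 + Real.sqrt 2]

lemma v75 {α : Type*} (a : α) (f : Fin 6 → α) : Matrix.vecCons a f (5 : Fin 7) = f (4 : Fin 6) := rfl
lemma v76 {α : Type*} (a : α) (f : Fin 6 → α) : Matrix.vecCons a f (6 : Fin 7) = f (5 : Fin 6) := rfl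
lemma v65 {α : Type*} (a : α) (f : Fin 5 → α) : Matrix.vecCons a f (5 : Fin 6) = f (4 : Fin 5) := rfl

lemma part1' : NY1.mulVec dvec = (2 + Real.sqrt 2) • dvec := by
  have h2 : Real.sqrt 2 * Real.sqrt 2 = 2 := Real.mul_self_sqrt (by norm_num)
  funext i
  fin_cases i <;>
    simp [NY1, dvec, Matrix.mulVec, dotProduct, Fin.sum_univ_seven, v75, v76, v65] <;>
    nlinarith [h2]

lemma dvec_pos (i : Fin 7) : 0 < dvec i := by
  have h : 0 < Real.sqrt 2 := Real.sqrt_pos.mpr (by norm_num)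
  fin_cases i <;> simp [dvec, v75, v76, v65] <;> linarith

lemma NY1C_entry (i j : Fin 7) : NY1C i j = ((NY1 i j : ℝ) : ℂ) ∧ 0 ≤ NY1 i j := by
  fin_cases i <;> fin_cases j <;> norm_num [NY1, NY1C, v75, v76, v65]

lemma eval_charpoly' {n : Type*} [DecidableEq n] [Fintype n] {R : Type*} [CommRing R]
    (M : Matrix n n R) (μ : R) :
    (Matrix.charpoly M).eval μ = (μ • (1 : Matrix n n R) - M).det := by
  have h := RingHom.map_det (Polynomial.evalRingHom μ) (Matrix.charmatrix M)
  rw [Matrix.charpoly]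
  rw [show (Matrix.charmatrix M).det.eval μ
      = ((Matrix.charmatrix M).map (Polynomial.evalRingHom μ)).det from h]
  congr 1
  ext i j
  by_cases h : i = j
  · subst h; simp [Matrix.charmatrix_apply_eq, Matrix.one_apply]
  · simp [Matrix.charmatrix_apply_ne M i j h, Matrix.one_apply_ne h]

theorem dvec_is_perron_eigenvector :
    NY1.mulVec dvec = (2 + Real.sqrt 2) • dvec ∧
    ∀ μ ∈ (Matrix.charpoly NY1C).roots, ‖μ‖ ≤ 2 + Real.sqrt 2 := by
  refine ⟨part1', ?_⟩
  intro μ hμ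
  -- μ is a root of the charpoly, so det (μ•1 - NY1C) = 0
  have hroot : (Matrix.charpoly NY1C).eval μ = 0 := by
    have := Polynomial.isRoot_of_mem_roots hμ
    exact this
  rw [eval_charpoly'] at hroot
  obtain ⟨v, hv0, hveq⟩ := (Matrix.exists_mulVec_eq_zero_iff).mpr hroot
  -- so NY1C.mulVec v = μ • v
  have heig : NY1C.mulVec v = μ • v := by
    have h1 : (μ • (1 : Matrix (Fin 7) (Fin 7) ℂ)).mulVec v - NY1C.mulVec v = 0 := by
      rw [← Matrix.sub_mulVec]; exact hveq
    have h2 : (μ • (1 : Matrix (Fin 7) (Fin 7) ℂ)).mulVec v = μ • v := by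
      rw [Matrix.smul_mulVec, Matrix.one_mulVec]
    rw [h2] at h1
    linear_combination (norm := module) -h1
  -- pick i maximizing |v i| / dvec i
  obtain ⟨i, -, hi⟩ := Finset.exists_max_image Finset.univ
    (fun i => ‖v i‖ / dvec i) ⟨0, Finset.mem_univ 0⟩
  set c := ‖v i‖ / dvec i with hc
  have hvj : ∀ j, ‖v j‖ ≤ c * dvec j := by
    intro j
    have := hi j (Finset.mem_univ j)
    have hdj := dvec_pos j
    rw [div_le_div_iff₀ hdj (dvec_pos i)] at this
    calc ‖v j‖ = ‖v j‖ / dvec j * dvec j := by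
          field_simp
      _ ≤ c * dvec j := by
          apply mul_le_mul_of_nonneg_right _ hdj.le
          rw [hc, div_le_div_iff₀ hdj (dvec_pos i)]
          · exact this
  have hcpos : 0 < c := by
    obtain ⟨j, hj⟩ : ∃ j, v j ≠ 0 := by
      by_contra h
      push_neg at h
      exact hv0 (funext h)
    have h1 : 0 < ‖v j‖ / dvec j :=
      div_pos (by simpa using hj) (dvec_pos j)
    exact lt_of_lt_of_le h1 (hi j (Finset.mem_univ j))
  have hvi : 0 < ‖v i‖ := by
    have : c * dvec i = ‖v i‖ := by
      rw [hc, div_mul_cancel₀ _ (dvec_pos i).ne']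
    nlinarith [dvec_pos i]
  -- key estimate
  have key : ‖μ‖ * ‖v i‖ ≤ (2 + Real.sqrt 2) * ‖v i‖ := by
    have h1 : ‖μ * v i‖ = ‖(NY1C.mulVec v) i‖ := by
      rw [heig]; simp [Pi.smul_apply, smul_eq_mul]
    have h2 : ‖(NY1C.mulVec v) i‖ ≤ ∑ j, NY1 i j * ‖v j‖ := by
      rw [Matrix.mulVec, dotProduct]
      refine le_trans (norm_sum_le _ _) ?_
      apply Finset.sum_le_sum
      intro j _
      rw [(NY1C_entry i j).1, norm_mul, Complex.norm_real,
        Real.norm_of_nonneg (NY1C_entry i j).2]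
    have h3 : ∑ j, NY1 i j * ‖v j‖ ≤ ∑ j, NY1 i j * (c * dvec j) := by
      apply Finset.sum_le_sum
      intro j _
      exact mul_le_mul_of_nonneg_left (hvj j) (NY1C_entry i j).2
    have h4 : ∑ j, NY1 i j * (c * dvec j) = c * (NY1.mulVec dvec) i := by
      rw [Matrix.mulVec, dotProduct, Finset.mul_sum]
      congr 1; funext j; ring
    have h5 : c * (NY1.mulVec dvec) i = (2 + Real.sqrt 2) * ‖v i‖ := by
      rw [part1']
      simp only [Pi.smul_apply, smul_eq_mul]
      have : c * dvec i = ‖v i‖ := by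
        rw [hc, div_mul_cancel₀ _ (dvec_pos i).ne']
      rw [← this]; ring
    calc ‖μ‖ * ‖v i‖ = ‖μ * v i‖ := (norm_mul _ _).symm
      _ = ‖(NY1C.mulVec v) i‖ := h1
      _ ≤ ∑ j, NY1 i j * ‖v j‖ := h2
      _ ≤ ∑ j, NY1 i j * (c * dvec j) := h3
      _ = c * (NY1.mulVec dvec) i := h4
      _ = (2 + Real.sqrt 2) * ‖v i‖ := h5
  exact le_of_mul_le_mul_right (by linarith [key]) hvi
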